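/- The constant 1/2 in Theorem on the reverse triangle inequality is sharp: if X is a real normed space with a nonzero vector and E > 0 satisfies ‖Σⱼ pⱼ•xⱼ‖/(Σⱼpⱼ‖xⱼ‖) ≥ E·min_j (‖a‖² − ‖a−xⱼ‖²)/(‖xⱼ‖‖a‖) for all admissible configurations (nonzero xⱼ, nonzero a with ‖a‖ ≥ ‖xⱼ−a‖, nonnegative weights summing to 1), then E ≤ 1/2. -/

import Mathlib

theorem stmt8 {X : Type*} [NormedAddCommGroup X] [NormedSpace ℝ X] [Nontrivial X]
    (E : ℝ) (hE : 0 < E)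
    (h : ∀ (n : ℕ) (hn : 0 < n) (x : Fin n → X) (p : Fin n → ℝ) (a : X),
      (∀ j, x j ≠ 0) → a ≠ 0 → (∀ j, ‖x j - a‖ ≤ ‖a‖) →
      (∀ j, 0 ≤ p j) → ∑ j, p j = 1 →
      ‖∑ j, p j • x j‖ / (∑ j, p j * ‖x j‖) ≥
        E * (Finset.univ.inf' (Finset.univ_nonempty_iff.mpr ⟨⟨0, hn⟩⟩)
          (fun j => (‖a‖ ^ 2 - ‖a - x j‖ ^ 2) / (‖x j‖ * ‖a‖)))) :
    E ≤ 1 / 2 := by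
  obtain ⟨a, ha⟩ := exists_ne (0 : X)
  have hna : 0 < ‖a‖ := norm_pos_iff.mpr ha
  -- key estimate: for ε ∈ (0,1), 1 ≥ E * (2 - ε)
  have key : ∀ ε : ℝ, 0 < ε → ε < 1 → E * (2 - ε) ≤ 1 := by
    intro ε hε hε1
    have hεa : ε • a ≠ 0 := smul_ne_zero hε.ne' ha
    have hh := h 1 one_pos (fun _ => ε • a) (fun _ => 1) a (fun _ => hεa) ha ?_ ?_ ?_
    · have hsum : ‖∑ j : Fin 1, (1 : ℝ) • (ε • a)‖ / (∑ j : Fin 1, 1 * ‖ε • a‖) = 1 := by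
        simp [norm_smul, abs_of_pos hε]
        exact ⟨hε.ne', ha⟩
      have hinf : (Finset.univ.inf' (Finset.univ_nonempty_iff.mpr ⟨⟨0, one_pos⟩⟩)
          (fun _ : Fin 1 => (‖a‖ ^ 2 - ‖a - ε • a‖ ^ 2) / (‖ε • a‖ * ‖a‖))) = 2 - ε := by
        rw [show (Finset.univ.inf' (Finset.univ_nonempty_iff.mpr ⟨⟨0, one_pos⟩⟩)
            (fun _ : Fin 1 => (‖a‖ ^ 2 - ‖a - ε • a‖ ^ 2) / (‖ε • a‖ * ‖a‖))) =
            (‖a‖ ^ 2 - ‖a - ε • a‖ ^ 2) / (‖ε • a‖ * ‖a‖) from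
          le_antisymm (Finset.inf'_le _ (Finset.mem_univ 0))
            (Finset.le_inf' _ _ (fun j _ => le_rfl))]
        have h1 : a - ε • a = (1 - ε) • a := by
          rw [sub_smul, one_smul]
        rw [h1, norm_smul, norm_smul, Real.norm_eq_abs, Real.norm_eq_abs,
          abs_of_pos hε, abs_of_pos (by linarith : (0:ℝ) < 1 - ε)]
        field_simp
        ring
      rw [hsum, hinf] at hh
      linarith
    · intro j
      have h1 : ε • a - a = (ε - 1) • a := by rw [sub_smul, one_smul]
      rw [h1, norm_smul, Real.norm_eq_abs, abs_of_neg (by linarith : ε - 1 < 0)]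
      nlinarith
    · intro j; norm_num
    · simp
  by_contra hc
  push_neg at hc
  have h2 : (0:ℝ) < 2 - 1 / E := by
    have : 1 / E < 2 := by
      rw [div_lt_iff₀ hE]; linarith
    linarith
  set ε := min (1/2 : ℝ) ((2 - 1/E)/2) with hεdef
  have hε : 0 < ε := lt_min (by norm_num) (by linarith)
  have hε1 : ε < 1 := lt_of_le_of_lt (min_le_left _ _) (by norm_num)
  have hk := key ε hε hε1
  have hε2 : ε < 2 - 1/E := lt_of_le_of_lt (min_le_right _ _) (by linarith)
  have : 1/E < 2 - ε := by linarith
  have : 1 < E * (2 - ε) := by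
    rw [div_lt_iff₀ hE] at this; linarith
  linarith
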